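/- Let K ∈ C_b^3(ℝ^{2d} × ℝ^{2d}) be a Mercer kernel, and let Z^{(1)},…,Z^{(N)} ∈ ℝ^{2d}. Then the differential Gram matrix ∇_{1,2}K(Z_N, Z_N) ∈ ℝ^{2dN × 2dN}, whose (n,n') block is the 2d × 2d matrix of mixed partial derivatives ∇_{1,2}K(Z^{(n)}, Z^{(n')}) of K with respect to its first and second arguments, is positive semidefinite. -/

import Mathlib

noncomputable section
open MeasureTheory RealInnerProductSpace Filter

/-- `ℝ^n` with the Euclidean structure. -/
abbrev Euc (n : ℕ) : Type := EuclideanSpace ℝ (Fin n)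

/-- Directional derivative of a real-valued function in the direction `v`. -/
def dirDeriv {F : Type*} [NormedAddCommGroup F] [NormedSpace ℝ F] (v : F) (f : F → ℝ) :
    F → ℝ := fun x => fderiv ℝ f x v

/-- Iterated partial derivative `D^α f`, where the multi-index `α` is encoded as the list of
the directions of the partial derivatives that are taken. -/
def mderiv {F : Type*} [NormedAddCommGroup F] [NormedSpace ℝ F] (vs : List F) (f : F → ℝ) :
    F → ℝ := vs.foldr dirDeriv f

/-- The `i`-th coordinate vector of `ℝ^n`. -/
def ee (n : ℕ) (i : Fin n) : Euc n := EuclideanSpace.single i 1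

/-- The coordinate directions of `ℝ^n × ℝ^n`; lists of such directions encode the
multi-indices `(α, β)` of mixed partial derivatives `D^{(α,β)} K`. -/
def prodDirs (n : ℕ) : Set (Euc n × Euc n) :=
  (Set.range fun i : Fin n => ((ee n i, 0) : Euc n × Euc n)) ∪
    (Set.range fun i : Fin n => (((0 : Euc n), ee n i) : Euc n × Euc n))

/-- `K` is a Mercer kernel: symmetric and positive semidefinite. -/
def IsMercer {n : ℕ} (K : Euc n → Euc n → ℝ) : Prop :=
  (∀ x y, K x y = K y x) ∧
    ∀ (m : ℕ) (x : Fin m → Euc n) (c : Fin m → ℝ),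
      0 ≤ ∑ i, ∑ j, c i * c j * K (x i) (x j)

/-- `K ∈ C_b^s(ℝ^n × ℝ^n)` : `K` is `s`-times continuously differentiable, and every partial
derivative of order at most `s` is bounded. -/
def KernelCb (n s : ℕ) (K : Euc n → Euc n → ℝ) : Prop :=
  ContDiff ℝ s (fun p : Euc n × Euc n => K p.1 p.2) ∧
    ∀ l : List (Euc n × Euc n), (∀ v ∈ l, v ∈ prodDirs n) → l.length ≤ s →
      ∃ C, ∀ p : Euc n × Euc n, |mderiv l (fun q : Euc n × Euc n => K q.1 q.2) p| ≤ C

/-- `κ² ≥ ‖K‖_{C_b^s}` : every partial derivative of `K` of order at most `s` is bounded in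
absolute value by `κ²` (with `κ ≥ 0`). -/
def KernelDerivBound (n s : ℕ) (K : Euc n → Euc n → ℝ) (κ : ℝ) : Prop :=
  0 ≤ κ ∧ ∀ l : List (Euc n × Euc n), (∀ v ∈ l, v ∈ prodDirs n) → l.length ≤ s →
    ∀ p : Euc n × Euc n, |mderiv l (fun q : Euc n × Euc n => K q.1 q.2) p| ≤ κ ^ 2

/-- `(H, emb, sec)` realizes the RKHS `H_K` of the kernel `K` : `H` is a Hilbert space of
functions (the linear inclusion `emb` into functions on `ℝ^n` is injective), the kernel
sections `sec x = K (x, ·)` belong to `H`, and the reproducing property holds. -/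
def IsRKHS {n : ℕ} {H : Type*} [NormedAddCommGroup H] [InnerProductSpace ℝ H]
    (K : Euc n → Euc n → ℝ) (emb : H →ₗ[ℝ] (Euc n → ℝ)) (sec : Euc n → H) : Prop :=
  Function.Injective emb ∧ (∀ x, emb (sec x) = K x) ∧
    ∀ (f : H) (x : Euc n), emb f x = ⟪f, sec x⟫

/-- The differential Gram matrix `∇_{1,2}K(Z_N, Z_N) ∈ ℝ^{2dN × 2dN}` whose
`((n,i),(n',j))` entry is the mixed partial derivative `∂²K/∂z_i ∂z'_j (Z^{(n)}, Z^{(n')})`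
of `K` with respect to its first and second arguments. -/
def gramD {n N : ℕ} (K : Euc n → Euc n → ℝ) (Z : Fin N → Euc n) :
    Matrix (Fin N × Fin n) (Fin N × Fin n) ℝ :=
  Matrix.of fun p q : Fin N × Fin n =>
    dirDeriv (ee n p.2) (fun x => dirDeriv (ee n q.2) (K x) (Z q.1)) (Z p.1)

open Asymptotics Topology

lemma mercer_fintype' {n : ℕ} {K : Euc n → Euc n → ℝ} (hK : IsMercer K)
    {ι : Type*} [Fintype ι] (x : ι → Euc n) (c : ι → ℝ) :
    0 ≤ ∑ i, ∑ j, c i * c j * K (x i) (x j) := by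
  obtain ⟨e⟩ : Nonempty (ι ≃ Fin (Fintype.card ι)) := ⟨Fintype.equivFin ι⟩
  have H := hK.2 (Fintype.card ι) (x ∘ e.symm) (c ∘ e.symm)
  calc (0:ℝ) ≤ ∑ i, ∑ j, (c ∘ e.symm) i * (c ∘ e.symm) j * K ((x ∘ e.symm) i) ((x ∘ e.symm) j) := H
    _ = ∑ i, ∑ j, c i * c j * K (x i) (x j) := by
        refine Fintype.sum_equiv e.symm _ _ fun i => ?_
        exact Fintype.sum_equiv e.symm _ _ fun j => rfl

lemma mixed_quot_tendsto {E : Type*} [NormedAddCommGroup E] [NormedSpace ℝ E]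
    {f : E → ℝ} (hf : ContDiff ℝ 2 f) (z u w : E) :
    Tendsto (fun h : ℝ =>
        (f (z + h • u + h • w) - f (z + h • u) - f (z + h • w) + f z) / h ^ 2)
      (𝓝[>] 0) (𝓝 (fderiv ℝ (fderiv ℝ f) z u w)) := by
  have hder : ∀ x ∈ interior (Set.univ : Set E), HasFDerivAt f (fderiv ℝ f x) x := fun x _ =>
    (hf.differentiable (by norm_num) x).hasFDerivAt
  have hfd : HasFDerivWithinAt (fderiv ℝ f) (fderiv ℝ (fderiv ℝ f) z)
      (interior (Set.univ : Set E)) z := by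
    have : Differentiable ℝ (fderiv ℝ f) :=
      (hf.fderiv_right (m := 1) le_rfl).differentiable one_ne_zero
    exact ((this z).hasFDerivAt).hasFDerivWithinAt
  set f'' := fderiv ℝ (fderiv ℝ f) z with hf''
  have A := convex_univ.taylor_approx_two_segment hder (Set.mem_univ z) hfd
    (v := u) (w := w) (by simp) (by simp)
  have B := convex_univ.taylor_approx_two_segment hder (Set.mem_univ z) hfd
    (v := 0) (w := w) (by simp) (by simp)
  simp only [smul_zero, add_zero, map_zero, ContinuousLinearMap.zero_apply, sub_zero] at B
  have C : (fun h : ℝ => (f (z + h • u + h • w) - f (z + h • u) - f (z + h • w) + f z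
      - h ^ 2 • f'' u w)) =o[𝓝[>] 0] fun h => h ^ 2 := by
    have := A.sub B
    apply this.congr_left
    intro h
    ring_nf
  have C' : Tendsto (fun h : ℝ => (f (z + h • u + h • w) - f (z + h • u) - f (z + h • w) + f z
      - h ^ 2 • f'' u w) / h ^ 2) (𝓝[>] 0) (𝓝 0) := by
    rw [← isLittleO_iff_tendsto]
    · exact C
    · intro h hh
      have : h = 0 := by nlinarith [sq_nonneg h]
      simp [this]
  have := C'.add (tendsto_const_nhds (x := f'' u w))
  rw [zero_add] at this
  apply this.congr'
  filter_upwards [self_mem_nhdsWithin] with h hh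
  have hh0 : h ≠ 0 := ne_of_gt hh
  have : (h:ℝ) ^ 2 ≠ 0 := pow_ne_zero _ hh0
  field_simp [smul_eq_mul]
  ring

lemma entry_eq {n : ℕ} (K : Euc n → Euc n → ℝ)
    (hF : ContDiff ℝ 2 (fun p : Euc n × Euc n => K p.1 p.2)) (a b u w : Euc n) :
    dirDeriv u (fun x => dirDeriv w (K x) b) a =
      fderiv ℝ (fderiv ℝ (fun p : Euc n × Euc n => K p.1 p.2)) (a, b) (u, 0) (0, w) := by
  set F : Euc n × Euc n → ℝ := fun p => K p.1 p.2 with hFdef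
  have hFd : Differentiable ℝ F := hF.differentiable (by norm_num)
  have hFd2 : Differentiable ℝ (fderiv ℝ F) :=
    (hF.fderiv_right (m := 1) le_rfl).differentiable one_ne_zero
  have step1 : ∀ x : Euc n, dirDeriv w (K x) b = fderiv ℝ F (x, b) (0, w) := by
    intro x
    have h1 : HasFDerivAt (K x)
        ((fderiv ℝ F (x, b)).comp (ContinuousLinearMap.inr ℝ (Euc n) (Euc n))) b :=
      (hFd (x, b)).hasFDerivAt.comp b (hasFDerivAt_prodMk_right x b)
    simp [dirDeriv, h1.fderiv]
  have step2 : HasFDerivAt (fun x : Euc n => fderiv ℝ F (x, b) (0, w))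
      (((ContinuousLinearMap.apply ℝ ℝ ((0 : Euc n), w)).comp
        (fderiv ℝ (fderiv ℝ F) (a, b))).comp
        (ContinuousLinearMap.inl ℝ (Euc n) (Euc n))) a := by
    have h2 : HasFDerivAt (fun z : Euc n × Euc n => fderiv ℝ F z (0, w))
        ((ContinuousLinearMap.apply ℝ ℝ ((0 : Euc n), w)).comp
          (fderiv ℝ (fderiv ℝ F) (a, b))) (a, b) :=
      ((ContinuousLinearMap.apply ℝ ℝ ((0 : Euc n), w)).hasFDerivAt).comp (a, b)
        (hFd2 (a, b)).hasFDerivAt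
    exact HasFDerivAt.comp (f := fun e : Euc n => (e, b)) a h2 (hasFDerivAt_prodMk_left (𝕜 := ℝ) a b)
  calc dirDeriv u (fun x => dirDeriv w (K x) b) a
      = fderiv ℝ (fun x : Euc n => fderiv ℝ F (x, b) (0, w)) a u := by
        simp only [dirDeriv]
        congr 1
        apply Filter.EventuallyEq.fderiv_eq
        filter_upwards with x using step1 x
    _ = fderiv ℝ (fderiv ℝ F) (a, b) (u, 0) (0, w) := by
        rw [step2.fderiv]
        simp

/-- The mixed second difference-quotient numerator. -/
def numQ {n N : ℕ} (K : Euc n → Euc n → ℝ) (Z : Fin N → Euc n)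
    (p q : Fin N × Fin n) (h : ℝ) : ℝ :=
  K (Z p.1 + h • ee n p.2) (Z q.1 + h • ee n q.2) - K (Z p.1 + h • ee n p.2) (Z q.1)
    - K (Z p.1) (Z q.1 + h • ee n q.2) + K (Z p.1) (Z q.1)

lemma numQ_tendsto {n N : ℕ} (K : Euc n → Euc n → ℝ)
    (hF : ContDiff ℝ 2 (fun p : Euc n × Euc n => K p.1 p.2)) (Z : Fin N → Euc n)
    (p q : Fin N × Fin n) :
    Tendsto (fun h : ℝ => numQ K Z p q h / h ^ 2) (𝓝[>] 0) (𝓝 (gramD K Z p q)) := by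
  have := mixed_quot_tendsto hF ((Z p.1, Z q.1)) ((ee n p.2, 0)) ((0, ee n q.2))
  have heq : gramD K Z p q =
      fderiv ℝ (fderiv ℝ (fun r : Euc n × Euc n => K r.1 r.2)) (Z p.1, Z q.1)
        (ee n p.2, 0) (0, ee n q.2) := by
    simp only [gramD, Matrix.of_apply]
    exact entry_eq K hF (Z p.1) (Z q.1) (ee n p.2) (ee n q.2)
  rw [heq]
  apply this.congr
  intro h
  simp [numQ, Prod.smul_mk]

theorem gram_psd' {d N : ℕ} (K : Euc (d + d) → Euc (d + d) → ℝ)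
    (hMercer : IsMercer K)
    (hF : ContDiff ℝ 2 (fun p : Euc (d+d) × Euc (d+d) => K p.1 p.2))
    (Z : Fin N → Euc (d + d)) :
    (gramD K Z).PosSemidef := by
  have hTend := fun p q => numQ_tendsto K hF Z p q
  have hsym : ∀ p q, gramD K Z p q = gramD K Z q p := by
    intro p q
    refine tendsto_nhds_unique (hTend p q) ((hTend q p).congr fun h => ?_)
    simp only [numQ]
    rw [hMercer.1 (Z q.1 + h • ee (d+d) q.2), hMercer.1 (Z q.1 + h • ee (d+d) q.2),
      hMercer.1 (Z q.1), hMercer.1 (Z q.1)]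
    ring
  constructor
  · show (gramD K Z).conjTranspose = gramD K Z
    ext p q
    simp only [Matrix.conjTranspose_apply, star_trivial]
    exact hsym q p
  · intro x
    have expand : ∀ h : ℝ,
        ∑ i : (Fin N × Fin (d+d)) ⊕ (Fin N × Fin (d+d)), ∑ j : (Fin N × Fin (d+d)) ⊕ (Fin N × Fin (d+d)),
          (Sum.elim x (-x)) i * (Sum.elim x (-x)) j *
            K (Sum.elim (fun p : Fin N × Fin (d+d) => Z p.1 + h • ee (d+d) p.2)
                (fun p : Fin N × Fin (d+d) => Z p.1) i)
              (Sum.elim (fun p : Fin N × Fin (d+d) => Z p.1 + h • ee (d+d) p.2)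
                (fun p : Fin N × Fin (d+d) => Z p.1) j)
          = ∑ p, ∑ q, x p * x q * numQ K Z p q h := by
      intro h
      simp only [Fintype.sum_sum_type, Sum.elim_inl, Sum.elim_inr, Finsupp.coe_neg, Pi.neg_apply,
        ← Finset.sum_add_distrib]
      refine Finset.sum_congr rfl fun p _ => ?_
      refine Finset.sum_congr rfl fun q _ => ?_
      simp only [numQ]
      ring
    have hnn : ∀ᶠ h in 𝓝[>] (0:ℝ), 0 ≤ ∑ p, ∑ q, x p * x q * (numQ K Z p q h / h ^ 2) := by
      filter_upwards [self_mem_nhdsWithin] with h hh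
      have key : 0 ≤ ∑ p, ∑ q, x p * x q * numQ K Z p q h := by
        rw [← expand h]
        exact mercer_fintype' hMercer _ _
      have : ∑ p, ∑ q, x p * x q * (numQ K Z p q h / h ^ 2)
          = (∑ p, ∑ q, x p * x q * numQ K Z p q h) / h ^ 2 := by
        simp only [← mul_div_assoc, ← Finset.sum_div]
      rw [this]
      exact div_nonneg key (sq_nonneg h)
    have hS : Tendsto (fun h : ℝ => ∑ p, ∑ q, x p * x q * (numQ K Z p q h / h ^ 2))
        (𝓝[>] 0) (𝓝 (∑ p, ∑ q, x p * x q * gramD K Z p q)) := by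
      refine tendsto_finset_sum _ fun p _ => ?_
      refine tendsto_finset_sum _ fun q _ => ?_
      exact (tendsto_const_nhds.mul (hTend p q))
    have hlim : 0 ≤ ∑ p, ∑ q, x p * x q * gramD K Z p q := ge_of_tendsto hS hnn
    have hdot : (x.sum fun i xi => x.sum fun j xj => star xi * gramD K Z i j * xj) = ∑ p, ∑ q, x p * x q * gramD K Z p q := by
      rw [Finsupp.sum_fintype _ _ (by simp)]
      refine Finset.sum_congr rfl fun p _ => ?_
      rw [Finsupp.sum_fintype _ _ (by simp)]
      exact Finset.sum_congr rfl fun q _ => by simp only [star_trivial]; ring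
    rw [hdot]
    exact hlim


/-- Proposition 3.4: for a Mercer kernel `K ∈ C_b^3(ℝ^{2d} × ℝ^{2d})` and any data points
`Z^{(1)}, …, Z^{(N)} ∈ ℝ^{2d}`, the differential Gram matrix `∇_{1,2}K(Z_N, Z_N)` is
positive semidefinite. -/
theorem differential_gram_matrix_posSemidef
    {d N : ℕ} (K : Euc (d + d) → Euc (d + d) → ℝ)
    (hMercer : IsMercer K)
    (hCb : KernelCb (d + d) 3 K)
    (Z : Fin N → Euc (d + d)) :
    (gramD K Z).PosSemidef :=
  gram_psd' K hMercer (hCb.1.of_le (by norm_num)) Z
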